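/- For every σ₀ > 0 and every t ∈ [0,T), the function x ↦ θ^{σ₀}(t,x) is non-increasing on ℝ: if x ≤ y then θ^{σ₀}(t,x) ≥ θ^{σ₀}(t,y). -/

import Mathlib

open MeasureTheory

lemma aux_integrable_exp_abs_quad (a b : ℝ) (hb : 0 < b) :
    Integrable (fun u : ℝ => Real.exp (a * |u| - b * u ^ 2)) := by
  have hmeas : AEStronglyMeasurable (fun u : ℝ => Real.exp (a * |u| - b * u ^ 2)) volume :=
    (Real.continuous_exp.comp ((continuous_const.mul continuous_abs).sub
      (continuous_const.mul (continuous_pow 2)))).aestronglyMeasurable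
  have hint : Integrable (fun u : ℝ => Real.exp (a ^ 2 / (2 * b)) *
      Real.exp (-(b / 2) * u ^ 2)) :=
    (integrable_exp_neg_mul_sq (half_pos hb)).const_mul _
  refine hint.mono' hmeas (Filter.Eventually.of_forall fun u => ?_)
  rw [Real.norm_eq_abs, abs_of_nonneg (Real.exp_pos _).le, ← Real.exp_add]
  apply Real.exp_le_exp.mpr
  have h2b : (0:ℝ) < 2 * b := by linarith
  rw [← mul_le_mul_iff_right₀ h2b]
  have he : 2 * b * (a ^ 2 / (2 * b) + -(b / 2) * u ^ 2) = a ^ 2 - b ^ 2 * u ^ 2 := by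
    field_simp; ring
  rw [he]
  nlinarith [sq_nonneg (a - b * |u|), sq_abs u]

/-- For every `σ₀ > 0` and `t ∈ [0,T)`, the map `x ↦ θ^{σ₀}(t,x)` is non-increasing. -/
theorem cole_hopf_nonincreasing_in_space
    (T κ δ : ℝ) (hT : 0 < T) (hδ : δ ∈ Set.Ioo 0 T)
    (η w r g : ℝ → ℝ)
    (hη : ∀ t ∈ Set.Icc (0:ℝ) T,
      HasDerivWithinAt η (η t ^ 2 - 2 * κ * η t - 1) (Set.Icc (0:ℝ) T) t)
    (hηT : η T = 1)
    (hw : ∀ t, w t = Real.exp (∫ s in t..T, (-κ + η s)))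
    (hr : ∀ t, r t = ∫ s in t..T, ((w s) ^ 2)⁻¹)
    (hrδ : 0 < r δ)
    (hg : ∀ x, g x = if |x| ≤ r δ then -x / r δ else -Real.sign x)
    (Θ : ℝ → ℝ → ℝ → ℝ)
    (hΘ : ∀ σ₀ : ℝ, 0 < σ₀ → ∀ t ∈ Set.Ico (0:ℝ) T, ∀ x : ℝ, Θ σ₀ t x =
      (∫ y : ℝ, ((x - y) / r t) *
        Real.exp ((σ₀ ^ 2)⁻¹ * (-(∫ v in (0:ℝ)..y, g v) - (x - y) ^ 2 / (2 * r t)))) /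
      (∫ y : ℝ, Real.exp ((σ₀ ^ 2)⁻¹ * (-(∫ v in (0:ℝ)..y, g v) - (x - y) ^ 2 / (2 * r t))))) :
    ∀ σ₀ : ℝ, 0 < σ₀ → ∀ t ∈ Set.Ico (0:ℝ) T, ∀ x y : ℝ, x ≤ y →
      Θ σ₀ t y ≤ Θ σ₀ t x := by
  intro σ₀ hσ t ht x x' hxx'
  have hc : (0:ℝ) < (σ₀ ^ 2)⁻¹ := inv_pos.mpr (by positivity)
  set c : ℝ := (σ₀ ^ 2)⁻¹ with hcdef
  -- continuity of η
  have hηc : ContinuousOn η (Set.Icc 0 T) := fun s hs => (hη s hs).continuousWithinAt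
  have htmem : Set.Icc t T ⊆ Set.Icc 0 T := Set.Icc_subset_Icc ht.1 le_rfl
  -- positivity of r t
  have hwpos : ∀ s, 0 < w s := fun s => by rw [hw s]; exact Real.exp_pos _
  have hwc : ContinuousOn w (Set.Icc t T) := by
    have h2 : IntegrableOn (fun u => -κ + η u) (Set.uIcc t T) volume := by
      rw [Set.uIcc_of_le ht.2.le]
      exact (continuousOn_const.add (hηc.mono htmem)).integrableOn_compact isCompact_Icc
    have h1 := intervalIntegral.continuousOn_primitive_interval_left h2
    rw [Set.uIcc_of_le ht.2.le] at h1
    exact (Real.continuous_exp.comp_continuousOn h1).congr fun s _ => hw s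
  have hR : 0 < r t := by
    rw [hr t]
    apply intervalIntegral.intervalIntegral_pos_of_pos_on
    · apply ContinuousOn.intervalIntegrable
      rw [Set.uIcc_of_le ht.2.le]
      exact (hwc.pow 2).inv₀ fun s _ => pow_ne_zero 2 (hwpos s).ne'
    · intro s _
      have := hwpos s
      positivity
    · exact ht.2
  set R : ℝ := r t with hRdef
  -- facts about g
  have hg' : ∀ v, g v = -(max (-1) (min 1 (v / r δ))) := by
    intro v
    rw [hg v]
    by_cases hv : |v| ≤ r δ
    · rw [if_pos hv]
      have h1 : v / r δ ≤ 1 := by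
        rw [div_le_one hrδ]; exact le_of_abs_le hv
      have h2 : (-1:ℝ) ≤ v / r δ := by
        rw [le_div_iff₀ hrδ]
        have := neg_le_of_abs_le hv
        linarith
      rw [min_eq_right h1, max_eq_right h2, neg_div]
    · rw [if_neg hv]
      push_neg at hv
      rcases lt_or_ge 0 v with hv0 | hv0
      · have h1 : (1:ℝ) < v / r δ := by
          rw [lt_div_iff₀ hrδ]
          rw [abs_of_pos hv0] at hv
          linarith
        rw [Real.sign_of_pos hv0, min_eq_left h1.le,
          max_eq_right (by norm_num : (-1:ℝ) ≤ 1)]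
      · have hvneg : v < 0 := by
          rcases hv0.lt_or_eq with h | h
          · exact h
          · exfalso; rw [h, abs_zero] at hv; linarith
        have h1 : v / r δ < -1 := by
          rw [div_lt_iff₀ hrδ]
          rw [abs_of_neg hvneg] at hv
          linarith
        rw [Real.sign_of_neg hvneg, min_eq_right (by linarith : v / r δ ≤ 1),
          max_eq_left h1.le, neg_neg]
  have hganti : Antitone g := by
    intro a b hab
    rw [hg' a, hg' b]
    apply neg_le_neg
    have hdiv : a / r δ ≤ b / r δ := by gcongr
    exact max_le_max le_rfl (min_le_min le_rfl hdiv)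
  have hgb : ∀ v, |g v| ≤ 1 := by
    intro v
    have h1 : max (-1) (min 1 (v / r δ)) ≤ 1 := max_le (by norm_num) (min_le_left _ _)
    have h2 : (-1:ℝ) ≤ max (-1) (min 1 (v / r δ)) := le_max_left _ _
    rw [hg' v, abs_le]
    constructor <;> [linarith; linarith]
  have hgcont : Continuous g := by
    have : g = fun v => -(max (-1) (min 1 (v / r δ))) := funext hg'
    rw [this]
    exact (continuous_const.max (continuous_const.min (continuous_id.div_const _))).neg
  have hgint : ∀ a b : ℝ, IntervalIntegrable g volume a b :=
    fun a b => hgcont.intervalIntegrable a b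
  -- facts about G
  set G : ℝ → ℝ := fun y => ∫ v in (0:ℝ)..y, g v with hGdef
  have hG2 : ∀ y : ℝ, (∫ v in (0:ℝ)..y, g v) = G y := fun _ => rfl
  have hGcont : Continuous G := by
    rw [hGdef]; exact intervalIntegral.continuous_primitive hgint 0
  have hGabs : ∀ y, |G y| ≤ |y| := by
    intro y
    have h : ‖∫ v in (0:ℝ)..y, g v‖ ≤ 1 * |y - 0| :=
      intervalIntegral.norm_integral_le_of_norm_le_const
        (fun v _ => by rw [Real.norm_eq_abs]; exact hgb v)
    rw [hG2 y] at h
    simpa using h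
  have hGadd : ∀ s k : ℝ, G (s + k) = G s + ∫ v in s..(s + k), g v := by
    intro s k
    have h := intervalIntegral.integral_add_adjacent_intervals (hgint 0 s) (hgint s (s + k))
    rw [hG2 s, hG2 (s + k)] at h
    linarith
  have hGsuper : ∀ s h k : ℝ, 0 ≤ h → 0 ≤ k →
      G s + G (s + h + k) ≤ G (s + h) + G (s + k) := by
    intro s h k hh hk
    have e1 := hGadd s h
    have e2 := hGadd (s + k) h
    rw [show s + h + k = s + k + h by ring, e2, e1]
    have e3 : (∫ v in s..(s + h), g (v + k)) = ∫ v in (s + k)..(s + k + h), g v := by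
      rw [intervalIntegral.integral_comp_add_right g k, show s + h + k = s + k + h by ring]
    have e4 : (∫ v in s..(s + h), g (v + k)) ≤ ∫ v in s..(s + h), g v :=
      intervalIntegral.integral_mono_on (by linarith)
        ((hgcont.comp (continuous_id.add continuous_const)).intervalIntegrable _ _)
        (hgint _ _) (fun v _ => hganti (by linarith))
    linarith
  -- the kernel L
  set L : ℝ → ℝ → ℝ := fun z u => Real.exp (c * (-G (z - u) - u ^ 2 / (2 * R))) with hLdef
  have hLpos : ∀ z u, 0 < L z u := fun z u => Real.exp_pos _
  have hLcont : ∀ z, Continuous (L z) := by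
    intro z
    simp only [hLdef]
    exact Real.continuous_exp.comp (continuous_const.mul
      (((hGcont.comp (continuous_const.sub continuous_id)).neg).sub
        ((continuous_pow 2).div_const _)))
  have hb0 : (0:ℝ) < c / (2 * R) := div_pos hc (by linarith)
  have hLb : ∀ z u, L z u ≤ Real.exp (c * |z|) *
      Real.exp (c * |u| - c / (2 * R) * u ^ 2) := by
    intro z u
    simp only [hLdef]
    rw [← Real.exp_add]
    apply Real.exp_le_exp.mpr
    have h1 : -G (z - u) ≤ |z| + |u| := by
      have h2 := hGabs (z - u)
      have h3 : |z - u| ≤ |z| + |u| := abs_sub z u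
      have h4 := neg_abs_le (G (z - u))
      have h5 := neg_le_abs (G (z - u))
      linarith
    have h3 := mul_le_mul_of_nonneg_left h1 hc.le
    have h4 : c * (|z| + |u|) = c * |z| + c * |u| := by ring
    have h5 : c * (-G (z - u) - u ^ 2 / (2 * R)) =
        c * -G (z - u) - c / (2 * R) * u ^ 2 := by ring
    linarith
  have hLint : ∀ z, Integrable (L z) := by
    intro z
    refine ((aux_integrable_exp_abs_quad c (c / (2 * R)) hb0).const_mul
      (Real.exp (c * |z|))).mono' (hLcont z).aestronglyMeasurable
      (Filter.Eventually.of_forall fun u => ?_)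
    rw [Real.norm_eq_abs, abs_of_pos (hLpos z u)]
    exact hLb z u
  have hLint' : ∀ z, Integrable (fun u => u * L z u) := by
    intro z
    refine ((aux_integrable_exp_abs_quad (c + 1) (c / (2 * R)) hb0).const_mul
      (Real.exp (c * |z|))).mono'
      (continuous_id.mul (hLcont z)).aestronglyMeasurable
      (Filter.Eventually.of_forall fun u => ?_)
    rw [Real.norm_eq_abs, abs_mul, abs_of_pos (hLpos z u)]
    calc |u| * L z u
        ≤ Real.exp |u| * (Real.exp (c * |z|) *
            Real.exp (c * |u| - c / (2 * R) * u ^ 2)) := by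
          refine mul_le_mul (by linarith [Real.add_one_le_exp |u|]) (hLb z u)
            (hLpos z u).le (Real.exp_pos _).le
      _ = Real.exp (c * |z|) * Real.exp ((c + 1) * |u| - c / (2 * R) * u ^ 2) := by
          simp only [← Real.exp_add]
          congr 1
          ring
  set D : ℝ → ℝ := fun z => ∫ u, L z u with hDdef
  set N : ℝ → ℝ := fun z => ∫ u, u * L z u with hNdef
  have hD : ∀ z, 0 < D z := by
    intro z
    simp only [hDdef]
    rw [integral_pos_iff_support_of_nonneg (fun u => (hLpos z u).le) (hLint z)]
    have hsupp : Function.support (L z) = Set.univ :=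
      Set.eq_univ_of_forall fun u => (hLpos z u).ne'
    rw [hsupp, Real.volume_univ]
    exact ENNReal.zero_lt_top
  -- rewriting Θ
  have hθ : ∀ z, Θ σ₀ t z = N z / (R * D z) := by
    intro z
    rw [hΘ σ₀ hσ t ht z, ← hcdef, ← hRdef]
    simp only [hG2]
    have h1d : ∀ y : ℝ, Real.exp (c * (-G y - (z - y) ^ 2 / (2 * R)))
        = (fun u => L z u) (z - y) := by
      intro y
      simp only [hLdef]
      rw [sub_sub_cancel]
    simp only [h1d]
    have h2 : (∫ y : ℝ, (z - y) / R * L z (z - y)) = ∫ u, u / R * L z u :=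
      integral_sub_left_eq_self (fun u => u / R * L z u) volume z
    have h2d : (∫ y : ℝ, L z (z - y)) = ∫ u, L z u :=
      integral_sub_left_eq_self (fun u => L z u) volume z
    rw [h2, h2d]
    have h3 : (∫ u : ℝ, u / R * L z u) = R⁻¹ * ∫ u, u * L z u := by
      rw [← integral_const_mul]
      congr 1
      funext u
      ring
    rw [h3]
    simp only [hNdef, hDdef]
    rw [inv_mul_eq_div, div_div]
  -- monotone comparison of kernels
  have hmono : ∀ u v : ℝ, v ≤ u → L x' u * L x v ≤ L x u * L x' v := by
    intro u v huv
    have hs' : G (x - u) + G (x' - v) ≤ G (x' - u) + G (x - v) := by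
      have hs := hGsuper (x - u) (x' - x) (u - v) (by linarith) (by linarith)
      rw [show x - u + (x' - x) + (u - v) = x' - v by ring,
        show x - u + (x' - x) = x' - u by ring,
        show x - u + (u - v) = x - v by ring] at hs
      linarith
    simp only [hLdef]
    rw [← Real.exp_add, ← Real.exp_add]
    apply Real.exp_le_exp.mpr
    have h5 := mul_le_mul_of_nonneg_left hs' hc.le
    nlinarith [h5]
  -- main comparison via double integrals
  set μ2 : Measure (ℝ × ℝ) := (volume : Measure ℝ).prod volume with hμ2def
  have hint1 : Integrable (fun p : ℝ × ℝ => (p.1 * L x p.1) * L x' p.2) μ2 :=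
    (hLint' x).mul_prod (hLint x')
  have hint2 : Integrable (fun p : ℝ × ℝ => (p.1 * L x' p.1) * L x p.2) μ2 :=
    (hLint' x').mul_prod (hLint x)
  have e1 : N x * D x' = ∫ p, (p.1 * L x p.1) * L x' p.2 ∂μ2 := by
    simp only [hNdef, hDdef, hμ2def]
    exact (integral_prod_mul (fun u => u * L x u) (L x')).symm
  have e2 : N x' * D x = ∫ p, (p.1 * L x' p.1) * L x p.2 ∂μ2 := by
    simp only [hNdef, hDdef, hμ2def]
    exact (integral_prod_mul (fun u => u * L x' u) (L x)).symm
  set F : ℝ × ℝ → ℝ :=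
    fun p => (p.1 * L x p.1) * L x' p.2 - (p.1 * L x' p.1) * L x p.2 with hFdef
  have hFint : Integrable F μ2 := hint1.sub hint2
  have hFswapint : Integrable (fun p : ℝ × ℝ => F p.swap) μ2 := by
    have ha : Integrable (fun p : ℝ × ℝ => L x' p.1 * (p.2 * L x p.2)) μ2 :=
      (hLint x').mul_prod (hLint' x)
    have hb' : Integrable (fun p : ℝ × ℝ => L x p.1 * (p.2 * L x' p.2)) μ2 :=
      (hLint x).mul_prod (hLint' x')
    refine (ha.sub hb').congr (Filter.Eventually.of_forall fun p => ?_)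
    simp only [hFdef, Prod.fst_swap, Prod.snd_swap, Pi.sub_apply]
    ring
  have eF : ∫ p, F p ∂μ2 = N x * D x' - N x' * D x := by
    simp only [hFdef]
    rw [integral_sub hint1 hint2, e1, e2]
  have eswap : ∫ p, F p.swap ∂μ2 = ∫ p, F p ∂μ2 := by
    rw [hμ2def]
    exact integral_prod_swap F
  have eadd : ∫ p, (F p + F p.swap) ∂μ2 = (∫ p, F p ∂μ2) + ∫ p, F p.swap ∂μ2 :=
    integral_add hFint hFswapint
  have hpt : ∀ p : ℝ × ℝ, 0 ≤ F p + F p.swap := by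
    rintro ⟨u, v⟩
    simp only [hFdef, Prod.fst_swap, Prod.snd_swap, Prod.swap_prod_mk]
    rcases le_total v u with hvu | huv
    · have h6 := hmono u v hvu
      nlinarith [mul_nonneg (sub_nonneg.mpr hvu) (sub_nonneg.mpr h6)]
    · have h6 := hmono v u huv
      nlinarith [mul_nonneg (sub_nonneg.mpr huv) (sub_nonneg.mpr h6)]
  have hnn : 0 ≤ ∫ p, (F p + F p.swap) ∂μ2 := integral_nonneg hpt
  have key : N x' * D x ≤ N x * D x' := by
    rw [eadd, eswap, eF] at hnn
    linarith
  -- conclusion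
  rw [hθ x', hθ x, div_le_div_iff₀ (mul_pos hR (hD x')) (mul_pos hR (hD x))]
  nlinarith [mul_le_mul_of_nonneg_left key hR.le]
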